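/- Let G=(V,E) be a correlation clustering instance, β∈(0,1), and let 𝒞 be any clustering of V. For every +edge uv∈E with C(u)=C(v) one has cost_𝒞(u)+cost_𝒞(v) ≥ |N(u) Δ N(v)|; consequently, for every uv∈E∖E_H with C(u)=C(v) (i.e., |N(u) Δ N(v)| > β·M_{uv}), one has cost_𝒞(u)+cost_𝒞(v) ≥ β·M_{uv}. -/
import Mathlib


open Finset

attribute [local instance] Classical.propDecidable

noncomputable section

variable {V : Type*}

/-- The neighborhood of `u` in the graph of `+`edges `E` (contains `u` itself,
since `E` contains all self-loops). -/
def Nbr [Fintype V] (E : V → V → Prop) (u : V) : Finset V :=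
  Finset.univ.filter (fun v => E u v)

/-- The degree `d(u) = |N(u)|`. -/
def deg [Fintype V] (E : V → V → Prop) (u : V) : ℕ := (Nbr E u).card

/-- `M_{uv} = max (d(u), d(v))`. -/
def Mdeg [Fintype V] (E : V → V → Prop) (u v : V) : ℕ := max (deg E u) (deg E v)

/-- The pruned edge set `E_H = {uv ∈ E : |N(u) Δ N(v)| ≤ β · M_{uv}}`. -/
def EH [Fintype V] (β : ℝ) (E : V → V → Prop) (u v : V) : Prop :=
  E u v ∧ ((symmDiff (Nbr E u) (Nbr E v)).card : ℝ) ≤ β * (Mdeg E u v : ℝ)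

/-- The neighborhood of `u` in the pruned graph `H`. -/
def NH [Fintype V] (β : ℝ) (E : V → V → Prop) (u : V) : Finset V :=
  Finset.univ.filter (fun v => EH β E u v)

/-- The fractional solution: `x_{uu} = 0` and
`x_{uv} = 1 − |N_H(u) ∩ N_H(v)| / M_{uv}` for `u ≠ v`. -/
def xval [Fintype V] (β : ℝ) (E : V → V → Prop) (u v : V) : ℝ :=
  if u = v then 0 else 1 - ((NH β E u ∩ NH β E v).card : ℝ) / (Mdeg E u v : ℝ)

/-- `cost_𝒞(u)`: the number of pairs incident to `u` in disagreement with respect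
to the clustering `C` (given as a labelling function). -/
def costC [Fintype V] {α : Type*} (E : V → V → Prop) (C : V → α) (u : V) : ℕ :=
  (Finset.univ.filter
    (fun v => (E u v ∧ C u ≠ C v) ∨ (¬ E u v ∧ v ≠ u ∧ C u = C v))).card

/-- The top-`k` norm `cost^k_𝒞` of the disagreement vector of the clustering `C`:
the maximum of `∑_{u ∈ T} cost_𝒞(u)` over subsets `T ⊆ V` of size `k`. -/
def costTopK [Fintype V] {α : Type*} (E : V → V → Prop) (C : V → α) (k : ℕ) : ℕ :=
  (Finset.powersetCard k (Finset.univ : Finset V)).sup (fun T => ∑ u ∈ T, costC E C u)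

/-- For any clustering `𝒞`: every `+`edge `uv ∈ E` with
`C(u) = C(v)` satisfies `cost_𝒞(u) + cost_𝒞(v) ≥ |N(u) Δ N(v)|`; consequently,
every `uv ∈ E ∖ E_H` with `C(u) = C(v)` satisfies
`cost_𝒞(u) + cost_𝒞(v) ≥ β · M_{uv}`. -/
theorem cost_lower_bound_of_pruned_edge [Fintype V] (E : V → V → Prop)
    (hsymm : ∀ u v, E u v → E v u) (hrefl : ∀ u, E u u)
    (β : ℝ) (hβ0 : 0 < β) (hβ1 : β < 1)
    {α : Type*} (C : V → α) :
    (∀ u v : V, E u v → C u = C v →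
      ((symmDiff (Nbr E u) (Nbr E v)).card : ℝ) ≤ (costC E C u : ℝ) + (costC E C v : ℝ)) ∧
    (∀ u v : V, E u v → ¬ EH β E u v → C u = C v →
      β * (Mdeg E u v : ℝ) ≤ (costC E C u : ℝ) + (costC E C v : ℝ)) := by
  have main : ∀ u v : V, E u v → C u = C v →
      ((symmDiff (Nbr E u) (Nbr E v)).card : ℝ) ≤ (costC E C u : ℝ) + (costC E C v : ℝ) := by
    intro u v huv hC
    have hsub : symmDiff (Nbr E u) (Nbr E v) ⊆
        (Finset.univ.filter
          (fun w => (E u w ∧ C u ≠ C w) ∨ (¬ E u w ∧ w ≠ u ∧ C u = C w))) ∪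
        (Finset.univ.filter
          (fun w => (E v w ∧ C v ≠ C w) ∨ (¬ E v w ∧ w ≠ v ∧ C v = C w))) := by
      intro w hw
      simp only [Finset.mem_symmDiff, Nbr, Finset.mem_filter, Finset.mem_univ, true_and] at hw
      simp only [Finset.mem_union, Finset.mem_filter, Finset.mem_univ, true_and]
      rcases hw with ⟨h1, h2⟩ | ⟨h1, h2⟩
      · by_cases hc : C u = C w
        · right; right
          exact ⟨h2, fun h => h2 (h ▸ hrefl v), hC.symm.trans hc⟩
        · left; left; exact ⟨h1, hc⟩
      · by_cases hc : C v = C w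
        · left; right
          exact ⟨h2, fun h => h2 (h ▸ hrefl u), hC.trans hc⟩
        · right; left; exact ⟨h1, hc⟩
    have hcard : (symmDiff (Nbr E u) (Nbr E v)).card ≤ costC E C u + costC E C v :=
      le_trans (Finset.card_le_card hsub) (Finset.card_union_le _ _)
    exact_mod_cast hcard
  refine ⟨main, fun u v huv hEH hC => ?_⟩
  have h1 := main u v huv hC
  have h2 : ¬ ((symmDiff (Nbr E u) (Nbr E v)).card : ℝ) ≤ β * (Mdeg E u v : ℝ) :=
    fun h => hEH ⟨huv, h⟩
  linarith

end
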